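/- arXiv:2107.13915 — 2 statements merged into one kernel-verified Lean document; each statement's English description precedes it below -/
import Mathlib

section
/- The constant C_F in the refined pre-Bloch group satisfies ⟨−1⟩·C_F = C_F. -/
open scoped Classical

variable (F : Type) [Field F]

/-- The subgroup of squares in `F^×`. -/
def sqSubgroup : Subgroup Fˣ := MonoidHom.range (powMonoidHom 2 : Fˣ →* Fˣ)

/-- The square class group `F^×/(F^×)²`. -/
def SqClassGroup : Type := Fˣ ⧸ sqSubgroup F

instance : CommGroup (SqClassGroup F) := inferInstanceAs (CommGroup (Fˣ ⧸ sqSubgroup F))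

/-- The group ring `R_F = ℤ[F^×/(F^×)²]`. -/
abbrev GrpRing := MonoidAlgebra ℤ (SqClassGroup F)

/-- `⟨x⟩ ∈ R_F`, the square class of `x ∈ F^×` (with the junk convention `⟨0⟩ = 1`). -/
noncomputable def cls (x : F) : GrpRing F :=
  if h : x = 0 then 1
  else MonoidAlgebra.of ℤ (SqClassGroup F)
    (QuotientGroup.mk (Units.mk0 x h) : Fˣ ⧸ sqSubgroup F)

/-- The relators of the refined pre-Bloch group: `[0]`, `[1]` and the refined five-term
relators `S_{x,y}`, inside the free `R_F`-module on the set `F` of generator labels. -/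
noncomputable def refinedRels : Set (F →₀ GrpRing F) :=
  {Finsupp.single (0 : F) 1, Finsupp.single (1 : F) 1} ∪
  {z | ∃ x y : F, x ≠ 0 ∧ x ≠ 1 ∧ y ≠ 0 ∧ y ≠ 1 ∧ x ≠ y ∧
    z = Finsupp.single x 1 - Finsupp.single y 1
        + Finsupp.single (y / x) (cls F x)
        - Finsupp.single ((1 - x⁻¹) / (1 - y⁻¹)) (cls F (x⁻¹ - 1))
        + Finsupp.single ((1 - x) / (1 - y)) (cls F (1 - x))}

/-- The refined pre-Bloch group `RP(F)`: the `R_F`-module with generators `[x]`, `x ∈ F^×`,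
subject to `[1] = 0` and the refined five-term relations `S_{x,y}`. -/
abbrev RP := (F →₀ GrpRing F) ⧸ Submodule.span (GrpRing F) (refinedRels F)

/-- The generator `[x]` of `RP(F)`. -/
noncomputable def gen (x : F) : RP F :=
  Submodule.Quotient.mk (Finsupp.single x 1)

/-- `ψ₁(x) = [x] + ⟨-1⟩[x⁻¹]`. -/
noncomputable def psi1 (x : F) : RP F := gen F x + cls F (-1) • gen F x⁻¹

/-- `ψ₂(x) = ⟨x⁻¹-1⟩[x] + ⟨1-x⟩[x⁻¹]` for `x ≠ 1`, and `ψ₂(1) = 0`. -/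
noncomputable def psi2 (x : F) : RP F :=
  if x = 1 then 0 else cls F (x⁻¹ - 1) • gen F x + cls F (1 - x) • gen F x⁻¹


/-- The expression `C(x) = [x] + ⟨-1⟩[1-x] + ⟨⟨1-x⟩⟩ψ₁(x)` in `RP(F)`. -/
noncomputable def Cexpr (x : F) : RP F :=
  gen F x + cls F (-1) • gen F (1 - x) + (cls F (1 - x) - 1) • psi1 F x

-- basic cls lemmas
theorem cls_zero : cls F 0 = 1 := dif_pos rfl

theorem cls_mul {a b : F} (ha : a ≠ 0) (hb : b ≠ 0) :
    cls F (a * b) = cls F a * cls F b := by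
  rw [cls, cls, cls, dif_neg (mul_ne_zero ha hb), dif_neg ha, dif_neg hb]
  have h : Units.mk0 (a*b) (mul_ne_zero ha hb) = Units.mk0 a ha * Units.mk0 b hb :=
    Units.ext rfl
  rw [h]
  exact map_mul (MonoidAlgebra.of ℤ (SqClassGroup F)) (QuotientGroup.mk (Units.mk0 a ha) : SqClassGroup F)
    (QuotientGroup.mk (Units.mk0 b hb) : SqClassGroup F)

theorem cls_sq (a : F) : cls F a * cls F a = 1 := by
  by_cases h : a = 0
  · rw [h, cls_zero, mul_one]
  · rw [cls, dif_neg h]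
    have h1 : (QuotientGroup.mk (Units.mk0 a h * Units.mk0 a h) : SqClassGroup F) = 1 := by
      rw [QuotientGroup.eq_one_iff]
      exact ⟨Units.mk0 a h, by rw [powMonoidHom_apply, sq]⟩
    exact (map_mul (MonoidAlgebra.of ℤ (SqClassGroup F)) (QuotientGroup.mk (Units.mk0 a h) : SqClassGroup F)
      (QuotientGroup.mk (Units.mk0 a h) : SqClassGroup F)).symm.trans
      ((congrArg (MonoidAlgebra.of ℤ (SqClassGroup F)) h1).trans (map_one _))

theorem cls_one : cls F 1 = 1 := by
  rw [cls, dif_neg (one_ne_zero : (1:F) ≠ 0)]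
  have h : Units.mk0 (1:F) one_ne_zero = 1 := Units.ext rfl
  rw [h]
  exact map_one (MonoidAlgebra.of ℤ (SqClassGroup F))

theorem cls_inv (a : F) : cls F a⁻¹ = cls F a := by
  by_cases h : a = 0
  · rw [h, inv_zero]
  · have h1 : cls F a⁻¹ * cls F a = 1 := by
      rw [← cls_mul F (inv_ne_zero h) h, inv_mul_cancel₀ h, cls_one]
    calc cls F a⁻¹ = cls F a⁻¹ * (cls F a * cls F a) := by rw [cls_sq, mul_one]
      _ = (cls F a⁻¹ * cls F a) * cls F a := by ring
      _ = cls F a := by rw [h1, one_mul]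

theorem cls_neg {a : F} (ha : a ≠ 0) : cls F (-a) = cls F (-1) * cls F a := by
  rw [← neg_one_mul, cls_mul F (neg_ne_zero.mpr one_ne_zero) ha]

theorem sq_smul (a : F) (m : RP F) : (cls F a * cls F a) • m = m := by
  rw [cls_sq, one_smul]

theorem mkQ_single (a : F) (c : GrpRing F) :
    (Submodule.span (GrpRing F) (refinedRels F)).mkQ (Finsupp.single a c) = c • gen F a := by
  rw [gen, Submodule.mkQ_apply, ← Submodule.Quotient.mk_smul, Finsupp.smul_single,
    smul_eq_mul, mul_one]

theorem relS {x y : F} (hx0 : x ≠ 0) (hx1 : x ≠ 1) (hy0 : y ≠ 0) (hy1 : y ≠ 1)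
    (hxy : x ≠ y) :
    gen F x - gen F y + cls F x • gen F (y / x)
      - cls F (x⁻¹ - 1) • gen F ((1 - x⁻¹) / (1 - y⁻¹))
      + cls F (1 - x) • gen F ((1 - x) / (1 - y)) = 0 := by
  have hm : (Finsupp.single x 1 - Finsupp.single y 1
        + Finsupp.single (y / x) (cls F x)
        - Finsupp.single ((1 - x⁻¹) / (1 - y⁻¹)) (cls F (x⁻¹ - 1))
        + Finsupp.single ((1 - x) / (1 - y)) (cls F (1 - x)))
      ∈ Submodule.span (GrpRing F) (refinedRels F) :=
    Submodule.subset_span (Or.inr ⟨x, y, hx0, hx1, hy0, hy1, hxy, rfl⟩)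
  have h0 : (Submodule.span (GrpRing F) (refinedRels F)).mkQ
      (Finsupp.single x 1 - Finsupp.single y 1
        + Finsupp.single (y / x) (cls F x)
        - Finsupp.single ((1 - x⁻¹) / (1 - y⁻¹)) (cls F (x⁻¹ - 1))
        + Finsupp.single ((1 - x) / (1 - y)) (cls F (1 - x))) = 0 := by
    rwa [Submodule.mkQ_apply, Submodule.Quotient.mk_eq_zero]
  simp only [map_add, map_sub, mkQ_single, one_smul] at h0
  exact h0

theorem psi1_inv (x : F) : psi1 F x⁻¹ = cls F (-1) • psi1 F x := by
  have h1 : psi1 F x⁻¹ = gen F x⁻¹ + cls F (-1) • gen F x⁻¹⁻¹ := rfl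
  rw [inv_inv] at h1
  have h2 : psi1 F x = gen F x + cls F (-1) • gen F x⁻¹ := rfl
  linear_combination (norm := module) h1 - (cls F (-1)) • h2 - sq_smul F (-1) (gen F x⁻¹)

theorem psi1_cocycle {a c : F} (ha0 : a ≠ 0) (ha1 : a ≠ 1) (hc0 : c ≠ 0) (hc1 : c ≠ 1)
    (hac : a ≠ c) : psi1 F c = psi1 F a + cls F a • psi1 F (c / a) := by
  have ha1' : a⁻¹ ≠ 1 := fun h => ha1 (inv_eq_one.mp h)
  have hc1' : c⁻¹ ≠ 1 := fun h => hc1 (inv_eq_one.mp h)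
  have h1 := relS F ha0 ha1 hc0 hc1 hac
  have h2 := relS F (inv_ne_zero ha0) ha1' (inv_ne_zero hc0) hc1'
    (fun h => hac (inv_injective h))
  simp only [inv_inv] at h2
  have ec : c⁻¹ / a⁻¹ = (c / a)⁻¹ := by
    rw [div_eq_mul_inv, div_eq_mul_inv, mul_inv, inv_inv]
  have hA : cls F (a - 1) = cls F (-1) * cls F (1 - a) := by
    rw [← neg_sub 1 a, cls_neg F (sub_ne_zero.mpr (Ne.symm ha1))]
  have hB : cls F (1 - a⁻¹) = cls F (-1) * cls F (a⁻¹ - 1) := by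
    rw [← neg_sub a⁻¹ 1, cls_neg F (sub_ne_zero.mpr ha1')]
  rw [ec, hA, hB, cls_inv] at h2
  have hda : psi1 F a = gen F a + cls F (-1) • gen F a⁻¹ := rfl
  have hdc : psi1 F c = gen F c + cls F (-1) • gen F c⁻¹ := rfl
  have hdq : psi1 F (c / a) = gen F (c / a) + cls F (-1) • gen F (c / a)⁻¹ := rfl
  have hH1 := sq_smul F (-1) (cls F (1 - a) • gen F ((1 - a) / (1 - c)))
  have hH2 := sq_smul F (-1) (cls F (a⁻¹ - 1) • gen F ((1 - a⁻¹) / (1 - c⁻¹)))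
  linear_combination (norm := module) -h1 - (cls F (-1)) • h2 - hH1 + hH2
    + hdc - hda - (cls F a) • hdq

theorem psi1_K (h4 : ∃ s : Finset F, 4 ≤ s.card) {w : F} (hw0 : w ≠ 0) (hw1 : w ≠ 1) :
    cls F (-1) • psi1 F w = -(cls F w • psi1 F w) := by
  obtain ⟨u, hu0, hu1, huw⟩ : ∃ u : F, u ≠ 0 ∧ u ≠ 1 ∧ u ≠ w⁻¹ := by
    obtain ⟨s, hs⟩ := h4
    by_contra hcon
    push_neg at hcon
    have hsub : s ⊆ ({0, 1, w⁻¹} : Finset F) := by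
      intro t _
      simp only [Finset.mem_insert, Finset.mem_singleton]
      by_cases h0 : t = 0
      · exact Or.inl h0
      by_cases h1 : t = 1
      · exact Or.inr (Or.inl h1)
      exact Or.inr (Or.inr (hcon t h0 h1))
    have hle := Finset.card_le_card hsub
    have c1 := Finset.card_insert_le (0:F) {1, w⁻¹}
    have c2 := Finset.card_insert_le (1:F) ({w⁻¹} : Finset F)
    have c3 : ({w⁻¹} : Finset F).card = 1 := Finset.card_singleton _
    omega
  have hwu0 : w * u ≠ 0 := mul_ne_zero hw0 hu0
  have hwu1 : w * u ≠ 1 := fun h => huw (by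
    rw [← one_mul u, ← inv_mul_cancel₀ hw0, mul_assoc, h, mul_one])
  have huwu : u ≠ w * u := fun h => hw1 (mul_right_cancel₀ hu0 (by rw [one_mul]; exact h)).symm
  have h1 := psi1_cocycle F hu0 hu1 hwu0 hwu1 huwu
  rw [mul_div_cancel_right₀ w hu0] at h1
  have h2 := psi1_cocycle F hwu0 hwu1 hu0 hu1 (Ne.symm huwu)
  have e : u / (w * u) = w⁻¹ := by
    rw [div_eq_iff hwu0, ← mul_assoc, inv_mul_cancel₀ hw0, one_mul]
  rw [e, psi1_inv, cls_mul F hw0 hu0] at h2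
  have hcomb : cls F u • psi1 F w + (cls F w * cls F u) • (cls F (-1) • psi1 F w) = 0 := by
    linear_combination (norm := module) -h1 - h2
  have h7 : psi1 F w + (cls F w * cls F (-1)) • psi1 F w = 0 := by
    linear_combination (norm := module) (cls F u) • hcomb - sq_smul F u (psi1 F w)
      - sq_smul F u ((cls F w * cls F (-1)) • psi1 F w)
  linear_combination (norm := module) (cls F w) • h7 - sq_smul F w (cls F (-1) • psi1 F w)

theorem psi1_defect {a b : F} (ha0 : a ≠ 0) (ha1 : a ≠ 1) (hb0 : b ≠ 0) (hb1 : b ≠ 1)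
    (hab1 : a * b ≠ 1) :
    (1 - cls F b) • psi1 F a = (1 - cls F a) • psi1 F b := by
  have hab0 : a * b ≠ 0 := mul_ne_zero ha0 hb0
  have h1 := psi1_cocycle F ha0 ha1 hab0 hab1
    (fun h => hb1 (mul_left_cancel₀ ha0 (by rw [mul_one]; exact h)).symm)
  rw [mul_div_cancel_left₀ b ha0] at h1
  have h2 := psi1_cocycle F hb0 hb1 hab0 hab1
    (fun h => ha1 (by
      have := mul_right_cancel₀ hb0 (by rw [one_mul]; exact h : (1:F) * b = a * b)
      exact this.symm))
  rw [mul_div_cancel_right₀ a hb0] at h2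
  linear_combination (norm := module) h2 - h1

theorem sigma_gen (h4 : ∃ s : Finset F, 4 ≤ s.card) {w : F} (hw0 : w ≠ 0) (hw1 : w ≠ 1) :
    cls F (-1) • gen F w = -(cls F w • psi1 F w) - gen F w⁻¹ := by
  have hK := psi1_K F h4 hw0 hw1
  have hdef : psi1 F w = gen F w + cls F (-1) • gen F w⁻¹ := rfl
  linear_combination (norm := module) hK - (cls F (-1)) • hdef - sq_smul F (-1) (gen F w⁻¹)

/-- The constant `C_F = [x] + ⟨-1⟩[1-x] + ⟨⟨1-x⟩⟩ψ₁(x)` (for any `x ∈ F \ {0,1}`) in the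
refined pre-Bloch group satisfies `⟨-1⟩·C_F = C_F`. -/
theorem cls_neg_one_smul_CF (h4 : ∃ s : Finset F, 4 ≤ s.card)
    (x : F) (hx0 : x ≠ 0) (hx1 : x ≠ 1) :
    cls F (-1) • Cexpr F x = Cexpr F x := by
  have hy0 : (1:F) - x ≠ 0 := sub_ne_zero.mpr (Ne.symm hx1)
  have hy1 : (1:F) - x ≠ 1 := fun h => hx0 (by linear_combination -h)
  have hKx := psi1_K F h4 hx0 hx1
  by_cases hhalf : (1:F) - x = x
  · simp only [Cexpr, hhalf]
    linear_combination (norm := module) sq_smul F (-1) (gen F x) + (cls F x - 1) • hKx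
      - sq_smul F x (psi1 F x)
  obtain ⟨z, hz⟩ : ∃ z : F, z = (1 - x) / x := ⟨_, rfl⟩
  have hz0 : z ≠ 0 := by rw [hz]; exact div_ne_zero hy0 hx0
  have hz1 : z ≠ 1 := by
    rw [hz]; intro h
    exact hhalf (by have := (div_eq_iff hx0).mp h; rwa [one_mul] at this)
  have hzm1 : z ≠ -1 := by
    rw [hz]; intro h
    have h' := (div_eq_iff hx0).mp h
    exact one_ne_zero (α := F) (by linear_combination h')
  have hz20 : z * z ≠ 0 := mul_ne_zero hz0 hz0
  have hz21 : z * z ≠ 1 := fun h => by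
    rcases mul_self_eq_one_iff.mp h with h' | h'
    exacts [hz1 h', hzm1 h']
  have hzzne : z ≠ z * z := fun h => hz1 (mul_left_cancel₀ hz0 (by rw [mul_one]; exact h)).symm
  have e1 : x⁻¹ - 1 = z := by rw [hz]; field_simp
  have e2 : (1 - x⁻¹) / (1 - (1 - x)⁻¹) = z * z := by
    rw [hz]; field_simp; ring
  have e3 : (1:F) - (1 - x) = x := sub_sub_cancel 1 x
  have e1' : (1 - x)⁻¹ - 1 = z⁻¹ := by rw [hz, inv_div]; field_simp; ring
  have e2' : (1 - (1 - x)⁻¹) / (1 - x⁻¹) = z⁻¹ * z⁻¹ := by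
    rw [← inv_div, e2, mul_inv]
  have e4 : x / (1 - x) = z⁻¹ := by rw [hz, inv_div]
  have hstar := relS F hx0 hx1 hy0 hy1 (Ne.symm hhalf)
  rw [e1, e2, e3, ← hz] at hstar
  have hstar' := relS F hy0 hy1 hx0 hx1 hhalf
  rw [e1', e2', e3, e4, cls_inv] at hstar'
  have hσz := sigma_gen F h4 hz0 hz1
  have hσz2 := sigma_gen F h4 hz20 hz21
  have hclzz : cls F (z * z) = 1 := by rw [cls_mul F hz0 hz0, cls_sq]
  rw [hclzz, one_smul, mul_inv] at hσz2
  have hz2co := psi1_cocycle F hz0 hz1 hz20 hz21 hzzne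
  rw [mul_div_cancel_left₀ z hz0] at hz2co
  have hP1 : cls F (-1) • (gen F x - gen F (1 - x)) - (gen F x - gen F (1 - x))
      = (cls F z * (cls F x + cls F (1 - x)) - 1 - cls F z) • psi1 F z := by
    linear_combination (norm := module) (cls F (-1)) • hstar + hstar'
      - (cls F x + cls F (1 - x)) • hσz + (cls F z) • hσz2 - (cls F z) • hz2co
      - sq_smul F z (psi1 F z)
  by_cases hprod : x * (1 - x) = 1
  · -- the case x² - x + 1 = 0
    have h1x : (1:F) - x = x⁻¹ := (inv_eq_of_mul_eq_one_right hprod).symm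
    have hc2c1 : cls F (1 - x) = cls F x := by rw [h1x, cls_inv]
    have hqz : cls F z = 1 := by
      rw [hz, div_eq_mul_inv, cls_mul F hy0 (inv_ne_zero hx0), cls_inv, hc2c1, cls_sq]
    have hzx : z = -x := by
      rw [hz]; field_simp; linear_combination -hprod
    have hzinv : z * z = z⁻¹ := by
      have h1 : (-x) * (-x * -x) = 1 := by linear_combination (x + 1) * hprod
      rw [hzx]
      exact (inv_eq_of_mul_eq_one_right h1).symm
    have hKz1 : cls F (-1) • psi1 F z = -psi1 F z := by
      have h := psi1_K F h4 hz0 hz1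
      rwa [hqz, one_smul] at h
    have hzz2eq : psi1 F (z * z) = cls F (-1) • psi1 F z := by rw [hzinv, psi1_inv]
    have hz2co1 : psi1 F (z * z) = psi1 F z + psi1 F z := by rw [hz2co, hqz, one_smul]
    have h3Z : psi1 F z + psi1 F z + psi1 F z = 0 := by
      linear_combination (norm := module) hzz2eq - hz2co1 + hKz1
    have hν0 : -(x * x) ≠ 0 := neg_ne_zero.mpr (mul_ne_zero hx0 hx0)
    have hν1 : -(x * x) ≠ 1 := fun h => hx0 (by linear_combination hprod - h)
    have hνz : -(x * x) ≠ z := by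
      rw [hzx]
      exact fun h => hx1 (mul_left_cancel₀ hx0 (by rw [mul_one]; exact neg_injective h))
    have ucoc := psi1_cocycle F hν0 hν1 hz0 hz1 hνz
    have eν : z / -(x * x) = -(x * x) := by
      rw [hzx]; field_simp; linear_combination (-(x+1)) * hprod
    have hcν : cls F (-(x * x)) = cls F (-1) := by
      rw [cls_neg F (mul_ne_zero hx0 hx0), cls_mul F hx0 hx0, cls_sq, mul_one]
    rw [eν, hcν] at ucoc
    have hKν := psi1_K F h4 hν0 hν1
    rw [hcν] at hKν
    have h2Z : psi1 F z + psi1 F z = 0 := by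
      linear_combination (norm := module) (2 : GrpRing F) • ucoc + (cls F (-1)) • hKν + hKν
        - (2 : GrpRing F) • sq_smul F (-1) (psi1 F (-(x * x)))
    have hZ0 : psi1 F z = 0 := by
      linear_combination (norm := module) h3Z - h2Z
    have hκZ : (cls F z * (cls F x + cls F (1 - x)) - 1 - cls F z) • psi1 F z = 0 := by
      rw [hZ0, smul_zero]
    have hP2 : (cls F (1 - x) - 1) • (cls F (-1) • psi1 F x)
        = (cls F (1 - x) - 1) • psi1 F x := by
      rw [hc2c1]
      linear_combination (norm := module) (cls F x - 1) • hKx - sq_smul F x (psi1 F x)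
    simp only [Cexpr]
    linear_combination (norm := module) hP1 + hP2 + hκZ + sq_smul F (-1) (gen F (1 - x))
  · -- generic case
    have hd1 := psi1_defect F hx0 hx1 hy0 hy1 hprod
    have hyz : (1:F) - x ≠ z := fun h => hx1 (mul_left_cancel₀ hy0 (by
      rw [mul_one]; exact (eq_div_iff hx0).mp (h.trans hz)))
    have u1c := psi1_cocycle F hy0 hy1 hz0 hz1 hyz
    have eu : z / (1 - x) = x⁻¹ := by rw [hz]; field_simp
    rw [eu, psi1_inv] at u1c
    have u1 : psi1 F z = psi1 F (1 - x) - (cls F (1 - x) * cls F x) • psi1 F x := by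
      linear_combination (norm := module) u1c + (cls F (1 - x)) • hKx
    have t2 : ((1 - cls F x) * (1 - cls F (1 - x))) • psi1 F z = 0 := by
      linear_combination (norm := module) ((1 - cls F x) * (1 - cls F (1 - x))) • u1
        + (cls F x + cls F (1 - x)) • hd1 + (cls F x) • sq_smul F (1 - x) (psi1 F x)
        + (cls F (1 - x) - cls F (1 - x) * cls F (1 - x)) • sq_smul F x (psi1 F x)
        - sq_smul F x (psi1 F (1 - x))
    have hs1 : cls F z * (cls F (1 - x) * cls F x) = 1 := by
      rw [hz, div_eq_mul_inv, cls_mul F hy0 (inv_ne_zero hx0), cls_inv, mul_mul_mul_comm,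
        cls_sq, cls_sq, mul_one]
    have hqcZ : (cls F z * (cls F (1 - x) * cls F x)) • psi1 F z = psi1 F z := by
      rw [hs1, one_smul]
    have hκZ : (cls F z * (cls F x + cls F (1 - x)) - 1 - cls F z) • psi1 F z = 0 := by
      linear_combination (norm := module) (-(cls F z)) • t2 + hqcZ
    have hP2 : (cls F (1 - x) - 1) • (cls F (-1) • psi1 F x)
        = (cls F (1 - x) - 1) • psi1 F x := by
      linear_combination (norm := module) (cls F (1 - x) - 1) • hKx + (cls F x + 1) • hd1
        - sq_smul F x (psi1 F (1 - x))
    simp only [Cexpr]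
    linear_combination (norm := module) hP1 + hP2 + hκZ + sq_smul F (-1) (gen F (1 - x))
end

section
/- For a real quadratically closed field R, the natural surjection from the refined pre-Bloch group RP(R) to the pre-Bloch group P(R) (obtained by taking coinvariants for the R^×-action) is an isomorphism. -/
open scoped Classical

variable (F : Type) [Field F]

/-- The coinvariants submodule of `RP(R)`: the span of the elements `⟨x⟩m - m`,
so that `RP(R)_{R^×} = RP(R) ⧸ coinvSubmodule R` is the pre-Bloch group `P(R)`. -/
noncomputable def coinvSubmodule : Submodule (GrpRing F) (RP F) :=
  Submodule.span (GrpRing F) {z : RP F | ∃ (x : F) (m : RP F), x ≠ 0 ∧ z = cls F x • m - m}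

section Aux
variable (R : Type) [Field R] [LinearOrder R] [IsStrictOrderedRing R]

lemma cls_of_ne {x : R} (hx : x ≠ 0) :
    cls R x = MonoidAlgebra.of ℤ (SqClassGroup R)
      (QuotientGroup.mk (Units.mk0 x hx)) := by
  simp only [cls, dif_neg hx]

lemma cls_mul_s15 {x y : R} (hx : x ≠ 0) (hy : y ≠ 0) :
    cls R (x * y) = cls R x * cls R y := by
  rw [cls_of_ne R (mul_ne_zero hx hy), cls_of_ne R hx, cls_of_ne R hy,
    Units.mk0_mul, QuotientGroup.mk_mul]
  exact map_mul _ _ _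

lemma cls_pos (hRQC : ∀ x : R, 0 < x → ∃ a : R, a ^ 2 = x) {x : R} (hx : 0 < x) :
    cls R x = 1 := by
  obtain ⟨a, ha⟩ := hRQC x hx
  have hx0 : x ≠ 0 := ne_of_gt hx
  have ha0 : a ≠ 0 := by rintro rfl; rw [← ha] at hx; simp at hx
  rw [cls_of_ne R hx0]
  have hmem : Units.mk0 x hx0 ∈ sqSubgroup R := by
    refine ⟨Units.mk0 a ha0, ?_⟩
    ext
    simpa using ha
  have h1 : (QuotientGroup.mk (Units.mk0 x hx0) : Rˣ ⧸ sqSubgroup R) = 1 :=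
    (QuotientGroup.eq_one_iff _).mpr hmem
  rw [h1]
  exact map_one _

lemma cls_neg_s15 (hRQC : ∀ x : R, 0 < x → ∃ a : R, a ^ 2 = x) {x : R} (hx : x < 0) :
    cls R x = cls R (-1) := by
  have h : x = (-1) * (-x) := by ring
  rw [h, cls_mul_s15 R (by norm_num) (by linarith)]
  rw [cls_pos R hRQC (show (0:R) < -x by linarith), mul_one]

lemma cls_sign (hRQC : ∀ x : R, 0 < x → ∃ a : R, a ^ 2 = x) {s t : R}
    (hs : s ≠ 0) (ht : t ≠ 0) (h : 0 < s ↔ 0 < t) : cls R s = cls R t := by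
  rcases lt_or_gt_of_ne hs with h1 | h1
  · have h2 : t < 0 := by
      rcases lt_or_gt_of_ne ht with h2 | h2
      · exact h2
      · exact absurd (h.mpr h2) (not_lt.mpr h1.le)
    rw [cls_neg_s15 R hRQC h1, cls_neg_s15 R hRQC h2]
  · rw [cls_pos R hRQC h1, cls_pos R hRQC (h.mp h1)]

lemma cls_inv_s15 (hRQC : ∀ x : R, 0 < x → ∃ a : R, a ^ 2 = x) {t : R} (ht : t ≠ 0) :
    cls R t⁻¹ = cls R t :=
  cls_sign R hRQC (inv_ne_zero ht) ht inv_pos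

lemma sigma_sq (hRQC : ∀ x : R, 0 < x → ∃ a : R, a ^ 2 = x) :
    cls R (-1) * cls R (-1) = 1 := by
  rw [← cls_mul_s15 R (by norm_num) (by norm_num)]
  norm_num
  exact cls_pos R hRQC one_pos

end Aux
section Aux2
variable (R : Type) [Field R] [LinearOrder R] [IsStrictOrderedRing R]

lemma gen_zero : gen R 0 = 0 := by
  rw [gen, Submodule.Quotient.mk_eq_zero]
  exact Submodule.subset_span (Or.inl (Or.inl rfl))

lemma gen_one : gen R 1 = 0 := by
  rw [gen, Submodule.Quotient.mk_eq_zero]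
  exact Submodule.subset_span (Or.inl (Or.inr rfl))

lemma mk_single (a : R) (c : GrpRing R) :
    (Submodule.Quotient.mk (Finsupp.single a c) : RP R) = c • gen R a := by
  rw [gen, ← Submodule.Quotient.mk_smul]
  congr 1
  rw [Finsupp.smul_single, smul_eq_mul, mul_one]

lemma rel5 {x y : R} (hx0 : x ≠ 0) (hx1 : x ≠ 1) (hy0 : y ≠ 0) (hy1 : y ≠ 1)
    (hxy : x ≠ y) :
    gen R x - gen R y + cls R x • gen R (y / x)
      - cls R (x⁻¹ - 1) • gen R ((1 - x⁻¹) / (1 - y⁻¹))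
      + cls R (1 - x) • gen R ((1 - x) / (1 - y)) = 0 := by
  have hmem : (Finsupp.single x 1 - Finsupp.single y 1
        + Finsupp.single (y / x) (cls R x)
        - Finsupp.single ((1 - x⁻¹) / (1 - y⁻¹)) (cls R (x⁻¹ - 1))
        + Finsupp.single ((1 - x) / (1 - y)) (cls R (1 - x)) : R →₀ GrpRing R)
      ∈ refinedRels R :=
    Or.inr ⟨x, y, hx0, hx1, hy0, hy1, hxy, rfl⟩
  have h0 : (Submodule.Quotient.mk (Finsupp.single x 1 - Finsupp.single y 1
        + Finsupp.single (y / x) (cls R x)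
        - Finsupp.single ((1 - x⁻¹) / (1 - y⁻¹)) (cls R (x⁻¹ - 1))
        + Finsupp.single ((1 - x) / (1 - y)) (cls R (1 - x))) : RP R) = 0 := by
    rw [Submodule.Quotient.mk_eq_zero]
    exact Submodule.subset_span hmem
  rw [Submodule.Quotient.mk_add, Submodule.Quotient.mk_sub, Submodule.Quotient.mk_add,
    Submodule.Quotient.mk_sub] at h0
  simp only [mk_single, one_smul] at h0
  exact h0

/-- `k z = ⟨-1⟩ • [z] - [z]`. -/
noncomputable def kk (z : R) : RP R := cls R (-1) • gen R z - gen R z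

lemma kk_zero : kk R 0 = 0 := by simp [kk, gen_zero]

lemma kk_one : kk R 1 = 0 := by simp [kk, gen_one]

lemma sigma_smul_kk (hRQC : ∀ x : R, 0 < x → ∃ a : R, a ^ 2 = x) (z : R) :
    cls R (-1) • kk R z = - kk R z := by
  rw [kk, smul_sub, smul_smul, sigma_sq R hRQC, one_smul]
  abel

lemma sigma_mul_smul_kk (hRQC : ∀ x : R, 0 < x → ∃ a : R, a ^ 2 = x)
    (c : GrpRing R) (z : R) :
    (cls R (-1) * c) • kk R z = -(c • kk R z) := by
  rw [mul_comm, mul_smul, sigma_smul_kk R hRQC, smul_neg]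

lemma kk_five (hRQC : ∀ x : R, 0 < x → ∃ a : R, a ^ 2 = x) {x y : R}
    (hx0 : x ≠ 0) (hx1 : x ≠ 1) (hy0 : y ≠ 0) (hy1 : y ≠ 1) (hxy : x ≠ y) :
    kk R x - kk R y + cls R x • kk R (y / x)
      - cls R (x⁻¹ - 1) • kk R ((1 - x⁻¹) / (1 - y⁻¹))
      + cls R (1 - x) • kk R ((1 - x) / (1 - y)) = 0 := by
  have h := rel5 R hx0 hx1 hy0 hy1 hxy
  have h2 := congrArg (fun m => cls R (-1) • m) h
  simp only [smul_zero] at h2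
  simp only [kk]
  linear_combination (norm := module) h2 - h

end Aux2
section Aux3
variable (R : Type) [Field R] [LinearOrder R] [IsStrictOrderedRing R]

/-- `F z = k z - k z⁻¹`. -/
noncomputable def FF (z : R) : RP R := kk R z - kk R z⁻¹

lemma sigma_smul_FF (hRQC : ∀ x : R, 0 < x → ∃ a : R, a ^ 2 = x) (z : R) : cls R (-1) • FF R z = - FF R z := by
  rw [FF, smul_sub, sigma_smul_kk R hRQC, sigma_smul_kk R hRQC]
  abel

lemma FF_five (hRQC : ∀ x : R, 0 < x → ∃ a : R, a ^ 2 = x) {x y : R} (hx0 : x ≠ 0) (hx1 : x ≠ 1) (hy0 : y ≠ 0) (hy1 : y ≠ 1)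
    (hxy : x ≠ y) : FF R x - FF R y + cls R x • FF R (y / x) = 0 := by
  have h1x : (1 : R) - x ≠ 0 := sub_ne_zero.mpr (Ne.symm hx1)
  have hix : x⁻¹ - 1 ≠ 0 := sub_ne_zero.mpr (by rwa [ne_eq, inv_eq_one])
  have h1 := kk_five R hRQC hx0 hx1 hy0 hy1 hxy
  have h2 := kk_five R hRQC (x := x⁻¹) (y := y⁻¹) (inv_ne_zero hx0)
    (by rwa [ne_eq, inv_eq_one]) (inv_ne_zero hy0) (by rwa [ne_eq, inv_eq_one])
    (fun h => hxy (inv_injective h))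
  rw [inv_inv, inv_inv] at h2
  rw [show (y⁻¹ / x⁻¹ : R) = x / y by
      rw [div_eq_mul_inv, inv_inv, mul_comm, ← div_eq_mul_inv]] at h2
  rw [show cls R x⁻¹ = cls R x from cls_inv_s15 R hRQC hx0] at h2
  rw [show cls R (x - 1) = cls R (-1) * cls R (1 - x) by
      rw [show (x - 1 : R) = (-1) * (1 - x) by ring,
        cls_mul_s15 R (by norm_num) h1x]] at h2
  rw [show cls R (1 - x⁻¹) = cls R (-1) * cls R (x⁻¹ - 1) by
      rw [show (1 - x⁻¹ : R) = (-1) * (x⁻¹ - 1) by ring,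
        cls_mul_s15 R (by norm_num) hix]] at h2
  rw [sigma_mul_smul_kk R hRQC, sigma_mul_smul_kk R hRQC] at h2
  simp only [FF]
  rw [inv_div]
  linear_combination (norm := module) h1 - h2

lemma FF_neg_one : FF R (-1) = 0 := by
  rw [FF, show ((-1 : R))⁻¹ = -1 by norm_num, sub_self]

lemma FF_neg (hRQC : ∀ x : R, 0 < x → ∃ a : R, a ^ 2 = x) {u : R} (hu0 : u ≠ 0) (hu1 : u ≠ 1) (hum1 : u ≠ -1) :
    FF R (-u) = - FF R u := by
  have h := FF_five R hRQC (x := -1) (y := -u) (by norm_num) (by norm_num)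
    (neg_ne_zero.mpr hu0) (fun h => hum1 (by linarith [h.symm] <;> linarith))
    (fun h => hu1 (neg_injective h).symm)
  rw [show ((-u) / (-1) : R) = u by field_simp, FF_neg_one, sigma_smul_FF R hRQC] at h
  linear_combination (norm := module) -h

lemma FF_sq (hRQC : ∀ x : R, 0 < x → ∃ a : R, a ^ 2 = x) {u : R}
    (hu : u < 0) (hum1 : u ≠ -1) : FF R (u * u) = 0 := by
  have hu0 : u ≠ 0 := ne_of_lt hu
  have huu : 0 < u * u := mul_pos_of_neg_of_neg hu hu
  have h := FF_five R hRQC (x := u) (y := u * u) hu0 (ne_of_lt (by linarith))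
    (ne_of_gt huu) (by
      intro hh
      rcases mul_self_eq_one_iff.mp hh with h1 | h1
      · rw [h1] at hu; norm_num at hu
      · exact hum1 h1)
    (by intro hh; rw [← hh] at huu; linarith)
  rw [show (u * u / u : R) = u by field_simp, cls_neg_s15 R hRQC hu,
    sigma_smul_FF R hRQC] at h
  linear_combination (norm := module) -h

end Aux3
section Aux4
variable (R : Type) [Field R] [LinearOrder R] [IsStrictOrderedRing R]

lemma FF_zero (hRQC : ∀ x : R, 0 < x → ∃ a : R, a ^ 2 = x) (z : R) : FF R z = 0 := by
  have hpos : ∀ w : R, 0 < w → w ≠ 1 → FF R w = 0 := by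
    intro w hw hw1
    obtain ⟨a, ha⟩ := hRQC w hw
    have ha0 : a ≠ 0 := by rintro rfl; rw [← ha] at hw; norm_num at hw
    set u : R := -|a| with hu_def
    have hu : u < 0 := neg_neg_iff_pos.mpr (abs_pos.mpr ha0)
    have huu : u * u = w := by
      rw [hu_def, neg_mul_neg, ← sq, sq_abs, ← ha, sq]
    have hum1 : u ≠ -1 := by
      intro h
      rw [h, show ((-1 : R)) * (-1) = 1 by norm_num] at huu
      exact hw1 huu.symm
    rw [← huu]
    exact FF_sq R hRQC hu hum1
  rcases eq_or_ne z 0 with rfl | hz0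
  · rw [FF, inv_zero, sub_self]
  rcases eq_or_ne z 1 with rfl | hz1
  · rw [FF, inv_one, sub_self]
  rcases eq_or_ne z (-1) with rfl | hzm1
  · exact FF_neg_one R
  rcases lt_or_gt_of_ne hz0 with hz | hz
  · have h := FF_neg R hRQC (u := -z) (neg_ne_zero.mpr hz0)
      (by intro h; apply hzm1; linarith) (by intro h; apply hz1; linarith)
    rw [neg_neg] at h
    rw [h, hpos (-z) (by linarith) (by intro h'; apply hzm1; linarith), neg_zero]
  · exact hpos z hz hz1

lemma kk_inv (hRQC : ∀ x : R, 0 < x → ∃ a : R, a ^ 2 = x) (z : R) :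
    kk R z⁻¹ = kk R z :=
  (eq_of_sub_eq_zero (FF_zero R hRQC z)).symm

end Aux4
section Aux5
variable (R : Type) [Field R] [LinearOrder R] [IsStrictOrderedRing R]

lemma kk_one_sub (hRQC : ∀ x : R, 0 < x → ∃ a : R, a ^ 2 = x) (x : R) :
    kk R (1 - x) = kk R x := by
  rcases eq_or_ne x 0 with rfl | hx0
  · rw [sub_zero, kk_one R, kk_zero R]
  rcases eq_or_ne x 1 with rfl | hx1
  · rw [sub_self, kk_one R, kk_zero R]
  rcases eq_or_ne x (2⁻¹ : R) with rfl | hx2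
  · rw [show (1 : R) - 2⁻¹ = 2⁻¹ by norm_num]
  have h1x : (1 : R) - x ≠ 0 := sub_ne_zero.mpr (Ne.symm hx1)
  have hix : x⁻¹ - 1 ≠ 0 := sub_ne_zero.mpr (by rwa [ne_eq, inv_eq_one])
  have h1 := kk_five R hRQC (x := x) (y := (2⁻¹ : R)) hx0 hx1 (by norm_num)
    (by norm_num) hx2
  have h2 := kk_five R hRQC (x := 1 - x) (y := (2⁻¹ : R)) h1x
    (by intro h; apply hx0; linarith) (by norm_num) (by norm_num)
    (by intro h; apply hx2; linarith)
  -- rewrite h1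
  rw [show ((2⁻¹ : R) / x) = (2 * x)⁻¹ by rw [div_eq_mul_inv, ← mul_inv],
    kk_inv R hRQC (2 * x),
    show ((1 : R) - (2⁻¹ : R)⁻¹) = -1 by norm_num,
    show ((1 - x⁻¹) / (-1) : R) = x⁻¹ - 1 by ring,
    show ((1 : R) - (2⁻¹ : R)) = 2⁻¹ by norm_num,
    show ((1 - x) / (2⁻¹ : R)) = 2 * (1 - x) by rw [div_eq_mul_inv, inv_inv, mul_comm]] at h1
  -- rewrite h2
  rw [show ((2⁻¹ : R) / (1 - x)) = (2 * (1 - x))⁻¹ by rw [div_eq_mul_inv, ← mul_inv],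
    kk_inv R hRQC (2 * (1 - x)),
    show ((1 : R) - (2⁻¹ : R)⁻¹) = -1 by norm_num,
    show ((1 - (1 - x)⁻¹) / (-1) : R) = (1 - x)⁻¹ - 1 by ring,
    show ((1 - x)⁻¹ - 1 : R) = (x⁻¹ - 1)⁻¹ by
      rw [show (x⁻¹ - 1 : R) = (1 - x) / x by field_simp, inv_div]
      field_simp; ring,
    kk_inv R hRQC (x⁻¹ - 1), cls_inv_s15 R hRQC hix,
    sub_sub_cancel,
    show ((1 : R) - (2⁻¹ : R)) = 2⁻¹ by norm_num,
    show (x / (2⁻¹ : R)) = 2 * x by rw [div_eq_mul_inv, inv_inv, mul_comm]] at h2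
  linear_combination (norm := module) h2 - h1

end Aux5
section Aux6
variable (R : Type) [Field R] [LinearOrder R] [IsStrictOrderedRing R]

lemma kk_eq_zero (hRQC : ∀ x : R, 0 < x → ∃ a : R, a ^ 2 = x) (z : R) :
    kk R z = 0 := by
  have hbig : ∀ w : R, 1 < w → kk R w = 0 := by
    intro w hw
    obtain ⟨a, ha⟩ := hRQC w (by linarith)
    have ha0 : a ≠ 0 := by rintro rfl; rw [← ha] at hw; norm_num at hw
    set b : R := -|a| with hb_def
    have hb : b < 0 := neg_neg_iff_pos.mpr (abs_pos.mpr ha0)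
    have hb0 : b ≠ 0 := ne_of_lt hb
    have hbb : b * b = w := by rw [hb_def, neg_mul_neg, ← sq, sq_abs, ← ha, sq]
    have hbm1 : b < -1 := by nlinarith
    have hb1 : b + 1 < 0 := by linarith
    have hb1' : b + 1 ≠ 0 := ne_of_lt hb1
    set x : R := (b + 1)⁻¹ with hx_def
    have hx : x < 0 := inv_lt_zero.mpr hb1
    have hx0 : x ≠ 0 := ne_of_lt hx
    have hxinv : x⁻¹ = b + 1 := by rw [hx_def, inv_inv]
    have h := kk_five R hRQC (x := x) (y := 1 - x) hx0 (by linarith)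
      (by intro hh; linarith) (by intro hh; apply hx0; linarith)
      (by intro hh; linarith)
    rw [show ((1 - x) / x : R) = b by rw [hx_def]; field_simp; ring] at h
    rw [show (x⁻¹ - 1 : R) = b by rw [hxinv]; ring] at h
    rw [show ((1 - x⁻¹) / (1 - (1 - x)⁻¹) : R) = w by
        rw [hx_def, inv_inv, show (1 - (b + 1)⁻¹ : R) = b / (b + 1) by field_simp; ring, inv_div,
          show (1 - (b + 1) / b : R) = -b⁻¹ by field_simp; ring, div_neg, div_inv_eq_mul, ← hbb]
        ring] at h
    rw [show ((1 - x) / (1 - (1 - x)) : R) = b by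
        rw [sub_sub_cancel, hx_def]; field_simp; ring] at h
    rw [cls_neg_s15 R hRQC hx, cls_neg_s15 R hRQC hb, cls_pos R hRQC (show (0:R) < 1 - x by linarith),
      one_smul, sigma_smul_kk R hRQC, sigma_smul_kk R hRQC, kk_one_sub R hRQC] at h
    linear_combination (norm := module) h
  rcases lt_trichotomy z 0 with hz | rfl | hz
  · rw [← kk_one_sub R hRQC]
    exact hbig _ (by linarith)
  · exact kk_zero R
  · rcases lt_trichotomy z 1 with hz1 | rfl | hz1
    · rw [← kk_inv R hRQC]
      exact hbig _ ((one_lt_inv₀ hz).mpr hz1)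
    · exact kk_one R
    · exact hbig z hz1

lemma sigma_smul_eq_self (hRQC : ∀ x : R, 0 < x → ∃ a : R, a ^ 2 = x) (m : RP R) :
    cls R (-1) • m = m := by
  obtain ⟨f, rfl⟩ := Submodule.Quotient.mk_surjective _ m
  induction f using Finsupp.induction with
  | zero => simp
  | single_add a c f _ _ ih =>
    rw [Submodule.Quotient.mk_add, smul_add, ih, mk_single, smul_comm]
    congr 1
    have hk := kk_eq_zero R hRQC a
    rw [kk, sub_eq_zero] at hk
    rw [hk]

end Aux6
/-- For a real quadratically closed field `R`, the natural surjection from the refined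
pre-Bloch group `RP(R)` onto the pre-Bloch group `P(R) = RP(R)_{R^×}` (the coinvariants
for the `R^×`-action) is an isomorphism, i.e. the quotient map is bijective. -/
theorem RP_to_preBloch_bijective (R : Type) [Field R] [LinearOrder R] [IsStrictOrderedRing R]
    (hRQC : ∀ x : R, 0 < x → ∃ a : R, a ^ 2 = x) :
    Function.Bijective (Submodule.mkQ (coinvSubmodule R)) := by
  have hbot : coinvSubmodule R = ⊥ := by
    rw [eq_bot_iff, coinvSubmodule, Submodule.span_le]
    rintro zz ⟨x, m, hx0, rfl⟩
    simp only [SetLike.mem_coe, Submodule.mem_bot]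
    rcases lt_or_gt_of_ne hx0 with hx | hx
    · rw [cls_neg_s15 R hRQC hx, sigma_smul_eq_self R hRQC, sub_self]
    · rw [cls_pos R hRQC hx, one_smul, sub_self]
  constructor
  · exact LinearMap.ker_eq_bot.mp (by rw [Submodule.ker_mkQ, hbot])
  · exact Submodule.mkQ_surjective _
end
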